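/- Let X, Y be Bernoulli random variables with marginals p_x, p_y ∈ (0,1), all four joint probabilities positive, ε = P(X=1,Y=1) − p_x p_y, and C² = ε²/((p_x−p_x²)(p_y−p_y²)) the squared Pearson correlation. If |ε| ≤ (1/2)·min_{i,j} p(i)p(j), then |I(X,Y) − C²/2| ≤ K|ε|³ for a constant K depending only on the marginals. -/

import Mathlib

lemma taylor_bound (t : ℝ) (ht : |t| ≤ 1/2) :
    |(1+t) * Real.log (1+t) - t - t^2/2| ≤ 4 * |t|^3 := by
  have h1 : |(-t)| < 1 := by rw [abs_neg]; linarith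
  have h := Real.abs_log_sub_add_sum_range_le h1 2
  simp [Finset.sum_range_succ] at h
  have h3 : (0:ℝ) ≤ |t|^3 := pow_nonneg (abs_nonneg t) 3
  have h2 : |Real.log (1+t) - (t - t^2/2)| ≤ 2 * |t|^3 := by
    have hle : |t|^3 / (1 - |t|) ≤ 2 * |t|^3 := by
      rw [div_le_iff₀ (by linarith)]; nlinarith
    calc |Real.log (1+t) - (t - t^2/2)| = |-t + t^2/(1+1) + Real.log (1+t)| := by ring_nf
      _ ≤ 2 * |t|^3 := h.trans hle
  set e := Real.log (1+t) - (t - t^2/2) with he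
  have hlog : Real.log (1+t) = t - t^2/2 + e := by rw [he]; ring
  have habs : |(1+t) * e| ≤ 3 * |t|^3 := by
    rw [abs_mul]
    have h15 : |1+t| ≤ 3/2 := by
      rcases abs_le.mp ht with ⟨a, b⟩; rw [abs_le]; constructor <;> linarith
    calc |1+t| * |e| ≤ (3/2) * (2 * |t|^3) :=
          mul_le_mul h15 h2 (abs_nonneg e) (by norm_num)
      _ = 3 * |t|^3 := by ring
  have hrw : (1+t) * Real.log (1+t) - t - t^2/2 = -t^3/2 + (1+t)*e := by rw [hlog]; ring
  rw [hrw]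
  calc |(-t^3/2 + (1+t)*e)| ≤ |(-t^3/2)| + |(1+t)*e| := abs_add_le _ _
    _ ≤ |t|^3/2 + 3 * |t|^3 := by
        rw [show |(-t^3/2)| = |t|^3/2 by rw [abs_div, abs_neg, abs_pow]; norm_num]
        linarith
    _ ≤ 4 * |t|^3 := by linarith

lemma term_pos (a ε : ℝ) (ha : 0 < a) (h : |ε| ≤ a/2) :
    |(a + ε) * Real.log ((a + ε)/a) - ε - ε^2/(2*a)| ≤ 4*|ε|^3/a^2 := by
  have ht : |ε/a| ≤ 1/2 := by
    rw [abs_div, abs_of_pos ha, div_le_iff₀ ha]; linarith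
  have h1 : (a + ε)/a = 1 + ε/a := by field_simp
  have e1 : (a + ε) * Real.log ((a + ε)/a) - ε - ε^2/(2*a)
      = a * ((1+ε/a) * Real.log (1+ε/a) - (ε/a) - (ε/a)^2/2) := by
    rw [h1]; field_simp
  have e2 : 4*|ε|^3/a^2 = a * (4 * |ε/a|^3) := by
    rw [abs_div, abs_of_pos ha]; field_simp
  rw [e1, e2, abs_mul, abs_of_pos ha]
  exact mul_le_mul_of_nonneg_left (taylor_bound _ ht) ha.le

lemma term_neg (a ε : ℝ) (ha : 0 < a) (h : |ε| ≤ a/2) :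
    |(a - ε) * Real.log ((a - ε)/a) + ε - ε^2/(2*a)| ≤ 4*|ε|^3/a^2 := by
  have key := term_pos a (-ε) ha (by rwa [abs_neg])
  rw [abs_neg] at key
  calc |(a - ε) * Real.log ((a - ε)/a) + ε - ε^2/(2*a)|
      = |(a + -ε) * Real.log ((a + -ε)/a) - (-ε) - (-ε)^2/(2*a)| := by ring_nf
    _ ≤ 4*|ε|^3/a^2 := key

set_option maxHeartbeats 1000000 in
/-- restatement of Theorem 1 in terms of the squared Pearson correlation
C² = ε²/((p_x−p_x²)(p_y−p_y²)): |I(X,Y) − C²/2| ≤ K|ε|³ with the constant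
K = 16 / (min_{i,j} p_X(i) p_Y(j))² depending only on the marginals. -/
theorem mutualInfo_sub_half_sq_corr_le (p : Fin 2 → Fin 2 → ℝ)
    (hpos : ∀ i j, 0 < p i j) (hsum : ∑ i, ∑ j, p i j = 1)
    (px py : ℝ) (hpx : px = ∑ j, p 1 j) (hpy : py = ∑ i, p i 1)
    (hpx0 : 0 < px) (hpx1 : px < 1) (hpy0 : 0 < py) (hpy1 : py < 1)
    (ε : ℝ) (hε : ε = p 1 1 - px * py)
    (C2 : ℝ) (hC2 : C2 = ε ^ 2 / ((px - px ^ 2) * (py - py ^ 2)))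
    (M : ℝ)
    (hM : M = min (min ((∑ j, p 0 j) * (∑ i, p i 0)) ((∑ j, p 0 j) * py))
      (min (px * (∑ i, p i 0)) (px * py)))
    (hsmall : |ε| ≤ M / 2) :
    |(∑ i, ∑ j, p i j * Real.log (p i j / ((∑ j', p i j') * (∑ i', p i' j)))) - C2 / 2| ≤
      (16 / M ^ 2) * |ε| ^ 3 := by
  simp only [Fin.sum_univ_two] at hsum hpx hpy hM ⊢
  have e1 : p 0 0 + p 0 1 = 1 - px := by linarith
  have e2 : p 1 0 + p 1 1 = px := hpx.symm
  have e3 : p 0 0 + p 1 0 = 1 - py := by linarith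
  have e4 : p 0 1 + p 1 1 = py := hpy.symm
  have h00 : p 0 0 = (1-px)*(1-py) + ε := by linear_combination hsum + hpx + hpy - hε
  have h01 : p 0 1 = (1-px)*py - ε := by linear_combination hε - hpy
  have h10 : p 1 0 = px*(1-py) - ε := by linear_combination hε - hpx
  have h11 : p 1 1 = px*py + ε := by linear_combination -hε
  have hA : 0 < (1-px)*(1-py) := mul_pos (by linarith) (by linarith)
  have hB : 0 < (1-px)*py := mul_pos (by linarith) hpy0
  have hC : 0 < px*(1-py) := mul_pos hpx0 (by linarith)
  have hD : 0 < px*py := mul_pos hpx0 hpy0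
  rw [e1, e3] at hM
  have hM0 : 0 < M := by rw [hM]; exact lt_min (lt_min hA hB) (lt_min hC hD)
  have hMA : M ≤ (1-px)*(1-py) := by rw [hM]; exact (min_le_left _ _).trans (min_le_left _ _)
  have hMB : M ≤ (1-px)*py := by rw [hM]; exact (min_le_left _ _).trans (min_le_right _ _)
  have hMC : M ≤ px*(1-py) := by rw [hM]; exact (min_le_right _ _).trans (min_le_left _ _)
  have hMD : M ≤ px*py := by rw [hM]; exact (min_le_right _ _).trans (min_le_right _ _)
  have t00 : p 0 0 * Real.log (p 0 0 / ((p 0 0 + p 0 1) * (p 0 0 + p 1 0)))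
      = ((1-px)*(1-py) + ε) * Real.log (((1-px)*(1-py) + ε) / ((1-px)*(1-py))) := by
    rw [e1, e3, h00]
  have t01 : p 0 1 * Real.log (p 0 1 / ((p 0 0 + p 0 1) * (p 0 1 + p 1 1)))
      = ((1-px)*py - ε) * Real.log (((1-px)*py - ε) / ((1-px)*py)) := by
    rw [e1, e4, h01]
  have t10 : p 1 0 * Real.log (p 1 0 / ((p 1 0 + p 1 1) * (p 0 0 + p 1 0)))
      = (px*(1-py) - ε) * Real.log ((px*(1-py) - ε) / (px*(1-py))) := by
    rw [e2, e3, h10]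
  have t11 : p 1 1 * Real.log (p 1 1 / ((p 1 0 + p 1 1) * (p 0 1 + p 1 1)))
      = (px*py + ε) * Real.log ((px*py + ε) / (px*py)) := by
    rw [e2, e4, h11]
  rw [t00, t01, t10, t11]
  have hCsplit : C2/2 = ε^2/(2*((1-px)*(1-py))) + ε^2/(2*((1-px)*py))
      + ε^2/(2*(px*(1-py))) + ε^2/(2*(px*py)) := by
    rw [hC2, show px - px^2 = px*(1-px) from by ring,
      show py - py^2 = py*(1-py) from by ring]
    have d1 : px ≠ 0 := hpx0.ne'
    have d2 : (1:ℝ) - px ≠ 0 := by intro h; nlinarith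
    have d3 : py ≠ 0 := hpy0.ne'
    have d4 : (1:ℝ) - py ≠ 0 := by intro h; nlinarith
    field_simp
    ring
  have b00 := term_pos ((1-px)*(1-py)) ε hA (by linarith)
  have b01 := term_neg ((1-px)*py) ε hB (by linarith)
  have b10 := term_neg (px*(1-py)) ε hC (by linarith)
  have b11 := term_pos (px*py) ε hD (by linarith)
  have hnn : (0:ℝ) ≤ 4*|ε|^3 := by positivity
  have c00 : 4*|ε|^3/((1-px)*(1-py))^2 ≤ 4*|ε|^3/M^2 :=
    div_le_div_of_nonneg_left hnn (pow_pos hM0 2) (pow_le_pow_left₀ hM0.le hMA 2)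
  have c01 : 4*|ε|^3/((1-px)*py)^2 ≤ 4*|ε|^3/M^2 :=
    div_le_div_of_nonneg_left hnn (pow_pos hM0 2) (pow_le_pow_left₀ hM0.le hMB 2)
  have c10 : 4*|ε|^3/(px*(1-py))^2 ≤ 4*|ε|^3/M^2 :=
    div_le_div_of_nonneg_left hnn (pow_pos hM0 2) (pow_le_pow_left₀ hM0.le hMC 2)
  have c11 : 4*|ε|^3/(px*py)^2 ≤ 4*|ε|^3/M^2 :=
    div_le_div_of_nonneg_left hnn (pow_pos hM0 2) (pow_le_pow_left₀ hM0.le hMD 2)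
  set T00 := ((1-px)*(1-py) + ε) * Real.log (((1-px)*(1-py) + ε) / ((1-px)*(1-py))) with hT00
  set T01 := ((1-px)*py - ε) * Real.log (((1-px)*py - ε) / ((1-px)*py)) with hT01
  set T10 := (px*(1-py) - ε) * Real.log ((px*(1-py) - ε) / (px*(1-py))) with hT10
  set T11 := (px*py + ε) * Real.log ((px*py + ε) / (px*py)) with hT11
  set D00 := T00 - ε - ε^2/(2*((1-px)*(1-py))) with hD00
  set D01 := T01 + ε - ε^2/(2*((1-px)*py)) with hD01
  set D10 := T10 + ε - ε^2/(2*(px*(1-py))) with hD10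
  set D11 := T11 - ε - ε^2/(2*(px*py)) with hD11
  have hsplit : T00 + T01 + (T10 + T11) - C2/2 = D00 + D01 + D10 + D11 := by
    rw [hCsplit, hD00, hD01, hD10, hD11]; ring
  rw [hsplit]
  have htri : |D00 + D01 + D10 + D11| ≤ |D00| + |D01| + |D10| + |D11| := by
    have g1 : |D00 + D01 + D10 + D11| ≤ |D00 + D01 + D10| + |D11| := abs_add_le _ _
    have g2 : |D00 + D01 + D10| ≤ |D00| + |D01| + |D10| := abs_add_three _ _ _
    linarith
  have final : (16 / M ^ 2) * |ε| ^ 3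
      = 4*|ε|^3/M^2 + 4*|ε|^3/M^2 + 4*|ε|^3/M^2 + 4*|ε|^3/M^2 := by ring
  linarith [b00, b01, b10, b11, c00, c01, c10, c11]
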